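/- Let K, L ≥ 2 be integers and set p = 1/K, g = p² / ((1−p)^{L−1}·(L·p + 1 − p) − 1). Then s*(K,L) = L·(K−1)^L / (K^{L+1} − (K−1)^{L−1}·((K−1)·K + L)) is the unique s ∈ (0,1) satisfying the first-order condition (g/s − K·g/s)·(L·(1−p)^{L−1} − (s/p)·(1 − (1−p)^L)) − p = 0, equivalently s = g·(1−K)·L·(1−p)^{L−1} / (g·(1−K)·(1 − (1−p)^L)/p + p). -/

import Mathlib

lemma key_ineq (a : ℝ) (ha : 1 ≤ a) (m : ℕ) :
    a^(m+2) + ((m:ℝ)+2) * a^(m+1) < (a+1)^(m+2) := by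
  induction m with
  | zero => push_cast; nlinarith
  | succ n ih =>
    have h0 : (0:ℝ) < a := by linarith
    have h1 : (0:ℝ) < a + 1 := by linarith
    have h2 := mul_lt_mul_of_pos_left ih h1
    push_cast
    push_cast at h2
    calc a^(n+1+2) + ((n:ℝ)+1+2) * a^(n+1+1)
        ≤ (a+1) * (a^(n+2) + ((n:ℝ)+2) * a^(n+1)) - a^(n+1) := by
          ring_nf; nlinarith [mul_pos h0 (pow_pos h0 n), Nat.cast_nonneg (α := ℝ) n]
      _ < (a+1) * (a+1)^(n+2) := by
          linarith [h2, pow_pos h0 (n+1)]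
      _ = (a+1)^(n+1+2) := by ring

/-- The subgame-perfect Nash equilibrium offer of the Multi-Proposer-Multi-Responder
Ultimatum Game with `K` proposers and `L` responders. -/
noncomputable def sstar (K L : ℕ) : ℝ :=
  ((L:ℝ) * ((K:ℝ) - 1)^L) /
    ((K:ℝ)^(L+1) - ((K:ℝ) - 1)^(L-1) * (((K:ℝ) - 1) * (K:ℝ) + (L:ℝ)))

theorem stmt16 (K L : ℕ) (hK : 2 ≤ K) (hL : 2 ≤ L)
    (p g : ℝ) (hp : p = 1 / (K:ℝ))
    (hg : g = p^2 / ((1-p)^(L-1) * ((L:ℝ) * p + 1 - p) - 1)) :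
    sstar K L ∈ Set.Ioo (0:ℝ) 1 ∧
    (∀ s ∈ Set.Ioo (0:ℝ) 1,
      ((g / s - (K:ℝ) * g / s) *
          ((L:ℝ) * (1-p)^(L-1) - (s / p) * (1 - (1-p)^L)) - p = 0
        ↔ s = sstar K L)) ∧
    sstar K L =
      g * (1 - (K:ℝ)) * (L:ℝ) * (1-p)^(L-1) /
        (g * (1 - (K:ℝ)) * ((1 - (1-p)^L) / p) + p) := by

  obtain ⟨m, rfl⟩ : ∃ m, L = m + 2 := ⟨L - 2, by omega⟩
  unfold sstar
  have h2k : (2:ℝ) ≤ (K:ℝ) := by exact_mod_cast hK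
  simp only [show m+2-1 = m+1 from rfl] at hg ⊢
  push_cast at hg hp ⊢
  generalize hKk : (K:ℝ) = k at h2k hp hg ⊢
  obtain ⟨a, ha1, rfl⟩ : ∃ a : ℝ, 1 ≤ a ∧ k = a + 1 := ⟨k - 1, by linarith, by ring⟩
  simp only [add_sub_cancel_right]

  have ha0 : (0:ℝ) < a := by linarith
  have ha1p : (0:ℝ) < a + 1 := by linarith
  have hne : a + 1 ≠ 0 := ne_of_gt ha1p
  have hkey := key_ineq a ha1 m
  have e1 : a^(m+1)*(a + ((m:ℝ)+2)) = a^(m+2) + ((m:ℝ)+2)*a^(m+1) := by ring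
  have hΔ : 0 < (a+1)^(m+2) - a^(m+1)*(a + ((m:ℝ)+2)) := by linarith
  have e2 : (a+1)^(m+2+1) - a^(m+1)*(a*(a+1) + ((m:ℝ)+2))
      = ((m:ℝ)+2)*a^(m+2) + (a+1)*((a+1)^(m+2) - (a^(m+2) + ((m:ℝ)+2)*a^(m+1))) := by ring
  have hD2 : ((m:ℝ)+2)*a^(m+2) < (a+1)^(m+2+1) - a^(m+1)*(a*(a+1) + ((m:ℝ)+2)) := by
    have := mul_pos ha1p (sub_pos.mpr hkey)
    linarith
  have hD0 : 0 < (a+1)^(m+2+1) - a^(m+1)*(a*(a+1) + ((m:ℝ)+2)) := by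
    have : (0:ℝ) < ((m:ℝ)+2)*a^(m+2) := by positivity
    linarith
  have hp0 : 0 < p := by rw [hp]; positivity
  have hpne : p ≠ 0 := ne_of_gt hp0
  have h1p : 1 - p = a/(a+1) := by rw [hp]; field_simp; ring
  have hX : (1-p)^(m+1) * (((m:ℝ)+2)*p + 1 - p) - 1
      = -((a+1)^(m+2) - a^(m+1)*(a+((m:ℝ)+2)))/(a+1)^(m+2) := by
    rw [h1p, hp]; simp only [div_pow]; field_simp; ring
  have hG : g = -(a+1)^m / ((a+1)^(m+2) - a^(m+1)*(a+((m:ℝ)+2))) := by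
    rw [hg, hX, hp, neg_div, div_neg, neg_div, neg_inj, div_div_eq_mul_div]
    rw [div_eq_div_iff hΔ.ne' hΔ.ne']
    field_simp
    ring
  refine ⟨⟨div_pos (by positivity) hD0, ?_⟩, ?_, ?_⟩
  · rw [div_lt_one hD0]; exact hD2
  · intro s hs
    obtain ⟨hs0, hs1⟩ := hs
    have hsne : s ≠ 0 := ne_of_gt hs0
    have heq : (g / s - (a + 1) * g / s) * (((m:ℝ) + 2) * (1 - p) ^ (m + 1) - s / p * (1 - (1 - p) ^ (m + 2))) - p
        = ((((m:ℝ)+2)*a^(m+2) - s * ((a+1)^(m+2+1) - a^(m+1)*(a*(a+1) + ((m:ℝ)+2))))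
            / (s * ((a+1)^(m+2) - a^(m+1)*(a+((m:ℝ)+2))) * (a+1))) := by
      rw [hG, h1p, hp]
      simp only [div_pow]
      field_simp
      ring
    rw [heq, div_eq_zero_iff]
    have hden : s * ((a+1)^(m+2) - a^(m+1)*(a+((m:ℝ)+2))) * (a+1) ≠ 0 :=
      ne_of_gt (mul_pos (mul_pos hs0 hΔ) ha1p)
    constructor
    · rintro (h | h)
      · rw [eq_div_iff hD0.ne']; linarith
      · exact absurd h hden
    · intro h
      left
      rw [h, div_mul_cancel₀ _ hD0.ne', sub_self]
  · have hY : g*(1-(a+1))*((1 - (1-p)^(m+2))/p) + p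
        = ((a+1)^(m+2+1) - a^(m+1)*(a*(a+1) + ((m:ℝ)+2))) / ((a+1) * ((a+1)^(m+2) - a^(m+1)*(a+((m:ℝ)+2)))) := by
      rw [hG, h1p, hp]
      simp only [div_pow]
      field_simp
      ring
    rw [hY, hG, h1p]
    rw [div_div_eq_mul_div]
    simp only [div_pow]
    field_simp
    ring
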